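/- Let n ≥ 1, let S ∈ ℝ^{n×n} be symmetric positive definite with symmetric positive definite square root S^{1/2}, and let C_S > 0. Let h > 0, let J : [0,h] → ℝ^{n×n} be continuous with S·J(t) + J(t)^T·S ⪯ −2C_S·S for every t ∈ [0,h], and let v : [0,h] → ℝ^n be continuous. Suppose δ : [0,h] → ℝ^n is differentiable with δ(0) = 0 and δ'(t) = J(t)·δ(t) + v(t) for all t ∈ [0,h]. Then for every t ∈ [0,h], δ(t)^T S δ(t) ≤ (t/C_S) · sup_{s∈[0,t]} ‖S^{1/2} v(s)‖². -/

import Mathlib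

open Matrix

section Helpers

variable {n : ℕ}

lemma my_inner_toEuc (A : Matrix (Fin n) (Fin n) ℝ) (x y : EuclideanSpace ℝ (Fin n)) :
    (inner ℝ x (Matrix.toEuclideanLin A y) : ℝ)
      = dotProduct (WithLp.equiv 2 _ x) (A *ᵥ WithLp.equiv 2 _ y) := by
  simp [PiLp.inner_apply, RCLike.inner_apply, dotProduct, Matrix.toEuclideanLin_apply, mul_comm]

lemma my_inner_eq_dot (x y : EuclideanSpace ℝ (Fin n)) :
    (inner ℝ x y : ℝ) = dotProduct (WithLp.equiv 2 _ x) (WithLp.equiv 2 _ y) := by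
  simp [PiLp.inner_apply, RCLike.inner_apply, dotProduct, mul_comm]

lemma my_dot_symm (A : Matrix (Fin n) (Fin n) ℝ) (hA : A.IsSymm) (x y : Fin n → ℝ) :
    dotProduct x (A *ᵥ y) = dotProduct (A *ᵥ x) y := by
  rw [Matrix.dotProduct_mulVec, ← Matrix.mulVec_transpose, hA.eq, dotProduct_comm]

end Helpers

theorem stmt12 (n : ℕ) (hn : 1 ≤ n)
    (S S12 : Matrix (Fin n) (Fin n) ℝ)
    (hSsym : S.IsSymm) (hSpos : S.PosDef)
    (hS12sym : S12.IsSymm) (hS12pos : S12.PosDef)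
    -- `S12` is the square root of `S`
    (hsqrt : S12 * S12 = S)
    (CS : ℝ) (hCS : 0 < CS) (h : ℝ) (hh : 0 < h)
    (J : ℝ → Matrix (Fin n) (Fin n) ℝ)
    (hJcont : ContinuousOn J (Set.Icc 0 h))
    -- `S·J(t) + J(t)ᵀ·S ⪯ −2 C_S S` on `[0,h]`
    (hcontr : ∀ t ∈ Set.Icc (0 : ℝ) h,
      ((-(2 * CS)) • S - (S * J t + (J t)ᵀ * S)).PosSemidef)
    (v : ℝ → EuclideanSpace ℝ (Fin n)) (hv : ContinuousOn v (Set.Icc 0 h))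
    (δ : ℝ → EuclideanSpace ℝ (Fin n)) (hδ0 : δ 0 = 0)
    -- `δ'(t) = J(t)·δ(t) + v(t)` on `[0,h]`
    (hδ : ∀ t ∈ Set.Icc (0 : ℝ) h,
      HasDerivWithinAt δ (Matrix.toEuclideanLin (J t) (δ t) + v t) (Set.Icc 0 h) t) :
    ∀ t ∈ Set.Icc (0 : ℝ) h,
      (inner ℝ (δ t) (Matrix.toEuclideanLin S (δ t)) : ℝ) ≤
        (t / CS) * ⨆ s : Set.Icc (0 : ℝ) t, ‖Matrix.toEuclideanLin S12 (v s)‖ ^ 2 := by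
  intro t ht
  obtain ⟨ht0, hth⟩ := ht
  have hsub : Set.Icc (0 : ℝ) t ⊆ Set.Icc 0 h := Set.Icc_subset_Icc le_rfl hth
  -- L12 is continuous
  have hL12cont : Continuous (Matrix.toEuclideanLin S12) :=
    (Matrix.toEuclideanLin S12).continuous_of_finiteDimensional
  -- boundedness of the sup family
  have hfun_cont : ContinuousOn (fun s => ‖Matrix.toEuclideanLin S12 (v s)‖ ^ 2)
      (Set.Icc 0 t) :=
    (hL12cont.comp_continuousOn (hv.mono hsub)).norm.pow 2
  have hbdd : BddAbove (Set.range fun s : Set.Icc (0 : ℝ) t =>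
      ‖Matrix.toEuclideanLin S12 (v ↑s)‖ ^ 2) := by
    have := (isCompact_Icc.image_of_continuousOn hfun_cont).bddAbove
    rwa [Set.image_eq_range] at this
  set Msq : ℝ := ⨆ s : Set.Icc (0 : ℝ) t, ‖Matrix.toEuclideanLin S12 (v s)‖ ^ 2 with hMsq
  have hMle : ∀ s ∈ Set.Icc (0 : ℝ) t, ‖Matrix.toEuclideanLin S12 (v s)‖ ^ 2 ≤ Msq :=
    fun s hs => le_ciSup hbdd (⟨s, hs⟩ : Set.Icc (0 : ℝ) t)
  -- key: ⟪x, S x⟫ = ‖S12 x‖²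
  have hSnorm : ∀ x : EuclideanSpace ℝ (Fin n),
      (inner ℝ x (Matrix.toEuclideanLin S x) : ℝ) = ‖Matrix.toEuclideanLin S12 x‖ ^ 2 := by
    intro x
    rw [← real_inner_self_eq_norm_sq, my_inner_toEuc, my_inner_eq_dot]
    have h1 : (WithLp.equiv 2 (Fin n → ℝ)) (Matrix.toEuclideanLin S12 x)
        = S12 *ᵥ (WithLp.equiv 2 _ x) := rfl
    rw [h1, my_dot_symm S12 hS12sym, Matrix.mulVec_mulVec, hsqrt]
    exact my_dot_symm S hSsym _ _
  -- the energy function and its derivative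
  set E : ℝ → ℝ := fun s => (inner ℝ (δ s) (Matrix.toEuclideanLin S (δ s)) : ℝ) with hEdef
  set D : ℝ → ℝ := fun s =>
      (inner ℝ (δ s) (Matrix.toEuclideanLin S (Matrix.toEuclideanLin (J s) (δ s) + v s)) : ℝ)
        + (inner ℝ (Matrix.toEuclideanLin (J s) (δ s) + v s)
            (Matrix.toEuclideanLin S (δ s)) : ℝ) with hDdef
  have hEnn : ∀ s, 0 ≤ E s := by
    intro s
    rw [hEdef]
    simp only
    rw [hSnorm]
    positivity
  have hEderiv : ∀ s ∈ Set.Icc (0 : ℝ) h, HasDerivWithinAt E (D s) (Set.Icc 0 h) s := by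
    intro s hs
    have hd := hδ s hs
    have hLS : HasDerivWithinAt (fun u => Matrix.toEuclideanLin S (δ u))
        (Matrix.toEuclideanLin S (Matrix.toEuclideanLin (J s) (δ s) + v s)) (Set.Icc 0 h) s := by
      have := ((Matrix.toEuclideanLin S).toContinuousLinearMap.hasFDerivAt
        (x := δ s)).comp_hasDerivWithinAt s hd
      exact this
    exact hd.inner ℝ hLS
  -- derivative bound
  have hDbound : ∀ s ∈ Set.Icc (0 : ℝ) t, D s ≤ Msq / CS := by
    intro s hs
    have hsI : s ∈ Set.Icc (0 : ℝ) h := hsub hs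
    set x : Fin n → ℝ := WithLp.equiv 2 _ (δ s) with hx
    set w : Fin n → ℝ := WithLp.equiv 2 _ (v s) with hw
    have e1 : (inner ℝ (δ s)
        (Matrix.toEuclideanLin S (Matrix.toEuclideanLin (J s) (δ s) + v s)) : ℝ)
        = dotProduct x (S *ᵥ (J s *ᵥ x + w)) := by
      rw [my_inner_toEuc]; rfl
    have e2 : (inner ℝ (Matrix.toEuclideanLin (J s) (δ s) + v s)
        (Matrix.toEuclideanLin S (δ s)) : ℝ)
        = dotProduct (J s *ᵥ x + w) (S *ᵥ x) := by
      rw [my_inner_toEuc]; rfl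
    have hDeq : D s = dotProduct x (S *ᵥ (J s *ᵥ x + w))
        + dotProduct (J s *ᵥ x + w) (S *ᵥ x) := by
      rw [hDdef]; simp only; rw [e1, e2]
    -- quadratic form inequality from contraction
    have hq := (hcontr s hsI).dotProduct_mulVec_nonneg x
    simp only [star_trivial] at hq
    have hq' : dotProduct x ((S * J s + (J s)ᵀ * S) *ᵥ x)
        ≤ -(2 * CS) * dotProduct x (S *ᵥ x) := by
      rw [Matrix.sub_mulVec, dotProduct_sub, sub_nonneg, Matrix.smul_mulVec,
        dotProduct_smul] at hq
      simpa using hq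
    -- cross term
    have hcross : dotProduct x (S *ᵥ w)
        ≤ ‖Matrix.toEuclideanLin S12 (δ s)‖ * ‖Matrix.toEuclideanLin S12 (v s)‖ := by
      have e3 : dotProduct x (S *ᵥ w)
          = (inner ℝ (Matrix.toEuclideanLin S12 (δ s)) (Matrix.toEuclideanLin S12 (v s)) : ℝ) := by
        rw [my_inner_eq_dot]
        have h1 : (WithLp.equiv 2 (Fin n → ℝ)) (Matrix.toEuclideanLin S12 (δ s)) = S12 *ᵥ x := rfl
        have h2 : (WithLp.equiv 2 (Fin n → ℝ)) (Matrix.toEuclideanLin S12 (v s)) = S12 *ᵥ w := rfl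
        rw [h1, h2, my_dot_symm S12 hS12sym, Matrix.mulVec_mulVec, hsqrt]
        exact my_dot_symm S hSsym _ _
      rw [e3]
      exact real_inner_le_norm _ _
    -- energy identity
    have hEx : dotProduct x (S *ᵥ x) = ‖Matrix.toEuclideanLin S12 (δ s)‖ ^ 2 := by
      have := hSnorm (δ s)
      rw [my_inner_toEuc] at this
      exact this
    -- expansion
    have expand : dotProduct x (S *ᵥ (J s *ᵥ x + w)) + dotProduct (J s *ᵥ x + w) (S *ᵥ x)
        = dotProduct x ((S * J s + (J s)ᵀ * S) *ᵥ x) + 2 * dotProduct x (S *ᵥ w) := by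
      rw [Matrix.add_mulVec, Matrix.mulVec_add, dotProduct_add, add_dotProduct]
      have c1 : dotProduct x (S *ᵥ (J s *ᵥ x)) = dotProduct x ((S * J s) *ᵥ x) := by
        rw [Matrix.mulVec_mulVec]
      have c2 : dotProduct (J s *ᵥ x) (S *ᵥ x) = dotProduct x (((J s)ᵀ * S) *ᵥ x) := by
        rw [← Matrix.mulVec_mulVec]
        conv_rhs => rw [Matrix.dotProduct_mulVec, Matrix.vecMul_transpose]
      have c3 : dotProduct w (S *ᵥ x) = dotProduct x (S *ᵥ w) := by
        rw [my_dot_symm S hSsym, dotProduct_comm]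
      rw [dotProduct_add, c1, c2, c3]
      ring
    rw [hDeq, expand]
    -- combine with AM-GM
    set a : ℝ := ‖Matrix.toEuclideanLin S12 (v s)‖ with ha
    set b : ℝ := ‖Matrix.toEuclideanLin S12 (δ s)‖ with hb
    have hb0 : (0:ℝ) ≤ b := norm_nonneg _
    have ha0 : (0:ℝ) ≤ a := norm_nonneg _
    have hamgm : 2 * (b * a) ≤ CS * b ^ 2 + a ^ 2 / CS := by
      have key : CS * b ^ 2 + a ^ 2 / CS - 2 * (b * a) = (CS * b - a) ^ 2 / CS := by
        field_simp; ring
      linarith [key, div_nonneg (sq_nonneg (CS * b - a)) hCS.le]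
    have haM : a ^ 2 ≤ Msq := hMle s hs
    have hEb : dotProduct x (S *ᵥ x) = b ^ 2 := hEx
    have h2cross : 2 * dotProduct x (S *ᵥ w) ≤ 2 * (b * a) := by
      have := hcross
      linarith
    calc dotProduct x ((S * J s + (J s)ᵀ * S) *ᵥ x) + 2 * dotProduct x (S *ᵥ w)
        ≤ -(2 * CS) * (b ^ 2) + 2 * (b * a) := by
          rw [← hEb]; linarith [hq', h2cross, hEb]
      _ ≤ -(2 * CS) * b ^ 2 + (CS * b ^ 2 + a ^ 2 / CS) := by linarith
      _ = -CS * b ^ 2 + a ^ 2 / CS := by ring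
      _ ≤ a ^ 2 / CS := by nlinarith [sq_nonneg b]
      _ ≤ Msq / CS := by gcongr
  -- monotonicity of g = (Msq/CS)·s − E s on [0,t]
  have hEcontI : ContinuousOn E (Set.Icc 0 h) := fun s hs => (hEderiv s hs).continuousWithinAt
  have hEcont : ContinuousOn E (Set.Icc 0 t) := hEcontI.mono hsub
  have hgmono : MonotoneOn (fun s => (Msq / CS) * s - E s) (Set.Icc 0 t) := by
    apply monotoneOn_of_hasDerivWithinAt_nonneg (f' := fun s => Msq / CS - D s)
      (convex_Icc 0 t)
    · exact (continuousOn_const.mul continuousOn_id).sub hEcont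
    · intro s hs
      rw [interior_Icc] at hs ⊢
      have hsI : s ∈ Set.Icc (0:ℝ) h := ⟨hs.1.le, hs.2.le.trans hth⟩
      have hd := (hEderiv s hsI).mono (Set.Ioo_subset_Icc_self.trans hsub)
      have hc : HasDerivWithinAt (fun u => (Msq / CS) * u) (Msq / CS) (Set.Ioo 0 t) s := by
        simpa using ((hasDerivAt_id s).const_mul (Msq / CS)).hasDerivWithinAt
      exact hc.sub hd
    · intro s hs
      rw [interior_Icc] at hs
      have := hDbound s (Set.Ioo_subset_Icc_self hs)
      linarith
  -- conclude
  have hmono := hgmono ⟨le_rfl, ht0⟩ ⟨ht0, le_rfl⟩ ht0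
  have hE0 : E 0 = 0 := by
    rw [hEdef]; simp only; rw [hδ0]; simp
  simp only [mul_zero, hE0, sub_zero] at hmono
  have hfin : E t ≤ (Msq / CS) * t := by linarith
  have hgoal : (inner ℝ (δ t) (Matrix.toEuclideanLin S (δ t)) : ℝ) = E t := by rw [hEdef]
  rw [hgoal]
  calc E t ≤ (Msq / CS) * t := hfin
    _ = (t / CS) * Msq := by ring
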